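/- If K is an m-semiring (K has a well-defined monus), then the period semiring has a well-defined monus: for all coalesced temporal K-elements k and k', the set of coalesced temporal K-elements k'' satisfying k ≼_T k' +_T k'' has a least element with respect to ≼_T, and this least element is k −_T k' = coal(k −_P k'). -/
import Mathlib


open scoped Classical

namespace TemporalK

variable {K : Type*}

/-- An interval over the time domain `{0, ..., N-1}`: a pair `(b, e)` with `b < e ≤ N`. -/
abbrev TInterval (N : ℕ) := {I : Fin (N + 1) × Fin (N + 1) // I.1 < I.2}

/-- A temporal `K`-element: a function assigning to each interval an element of `K`. -/
abbrev TempEl (N : ℕ) (K : Type*) := TInterval N → K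

/-- The interval `I = (b, e)` contains the time point `T` iff `b ≤ T < e`. -/
def Contains {N : ℕ} (I : TInterval N) (T : ℕ) : Prop :=
  (I.val.1 : ℕ) ≤ T ∧ T < (I.val.2 : ℕ)

/-- The timeslice of `𝒯` at time point `T`: the sum of `𝒯 I` over all intervals `I`
containing `T`. -/
noncomputable def slice {N : ℕ} [CommSemiring K] (𝒯 : TempEl N K) (T : ℕ) : K :=
  ∑ I ∈ Finset.univ.filter (fun I : TInterval N => Contains I T), 𝒯 I

/-- `T` is an (annotation) changepoint of `𝒯` iff `T = 0` or the timeslices at `T - 1`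
and `T` differ. -/
def Changepoint {N : ℕ} [CommSemiring K] (𝒯 : TempEl N K) (T : ℕ) : Prop :=
  T = 0 ∨ slice 𝒯 (T - 1) ≠ slice 𝒯 T

/-- `I = (b, e)` is a changepoint interval of `𝒯` iff `b` is a changepoint, `e` is a
changepoint or equals `N`, and no time point strictly between `b` and `e` is a changepoint. -/
def CPInterval {N : ℕ} [CommSemiring K] (𝒯 : TempEl N K) (I : TInterval N) : Prop :=
  Changepoint 𝒯 (I.val.1 : ℕ) ∧
    (Changepoint 𝒯 (I.val.2 : ℕ) ∨ (I.val.2 : ℕ) = N) ∧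
    ∀ T : ℕ, (I.val.1 : ℕ) < T → T < (I.val.2 : ℕ) → ¬ Changepoint 𝒯 T

/-- `K`-coalescing: maps changepoint intervals `(b, e)` to the timeslice at `b` and all
other intervals to `0`. -/
noncomputable def coal {N : ℕ} [CommSemiring K] (𝒯 : TempEl N K) : TempEl N K :=
  fun I => if CPInterval 𝒯 I then slice 𝒯 (I.val.1 : ℕ) else 0

/-- Snapshot equivalence: equal timeslices at every time point. -/
def SnapEq {N : ℕ} [CommSemiring K] (k k' : TempEl N K) : Prop :=
  ∀ T : ℕ, T < N → slice k T = slice k' T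

/-- A temporal `K`-element is coalesced iff it is the `K`-coalescing of some
temporal `K`-element. -/
def Coalesced {N : ℕ} [CommSemiring K] (k : TempEl N K) : Prop :=
  ∃ 𝒯 : TempEl N K, k = coal 𝒯

/-- Pointwise addition of temporal `K`-elements. -/
def padd {N : ℕ} [CommSemiring K] (k k' : TempEl N K) : TempEl N K :=
  fun I => k I + k' I

/-- Pointwise multiplication of temporal `K`-elements:
`(k ·_P k')(I) = Σ k(I')·k'(I'')` over all pairs `(I', I'')` whose intersection is
nonempty and equals `I`. -/
noncomputable def pmul {N : ℕ} [CommSemiring K] (k k' : TempEl N K) : TempEl N K :=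
  fun I =>
    ∑ p ∈ Finset.univ.filter (fun p : TInterval N × TInterval N =>
        max (p.1.val.1 : ℕ) (p.2.val.1 : ℕ) < min (p.1.val.2 : ℕ) (p.2.val.2 : ℕ) ∧
        (I.val.1 : ℕ) = max (p.1.val.1 : ℕ) (p.2.val.1 : ℕ) ∧
        (I.val.2 : ℕ) = min (p.1.val.2 : ℕ) (p.2.val.2 : ℕ)),
      k p.1 * k' p.2

/-- Addition of the period semiring: coalesced pointwise addition. -/
noncomputable def tadd {N : ℕ} [CommSemiring K] (k k' : TempEl N K) : TempEl N K :=
  coal (padd k k')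

/-- Multiplication of the period semiring: coalesced pointwise multiplication. -/
noncomputable def tmul {N : ℕ} [CommSemiring K] (k k' : TempEl N K) : TempEl N K :=
  coal (pmul k k')

/-- The zero of the period semiring: maps every interval to `0`. -/
def zeroT (N : ℕ) (K : Type*) [CommSemiring K] : TempEl N K := fun _ => 0

/-- The one of the period semiring: maps the interval `(0, N)` to `1` and every other
interval to `0`. -/
def oneT (N : ℕ) (K : Type*) [CommSemiring K] : TempEl N K :=
  fun I => if (I.val.1 : ℕ) = 0 ∧ (I.val.2 : ℕ) = N then 1 else 0

/-- Encoding of an annotation history `f : time points → K` as a coalesced temporal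
`K`-element: coalesce the element assigning `f T` to each singleton interval `(T, T+1)`. -/
noncomputable def enc {N : ℕ} [CommSemiring K] (f : Fin N → K) : TempEl N K :=
  coal (fun I =>
    if h : (I.val.2 : ℕ) = (I.val.1 : ℕ) + 1 then
      f ⟨(I.val.1 : ℕ), by have := I.val.2.isLt; omega⟩
    else 0)

/-- The natural preorder of the semiring `K`. -/
def nle [CommSemiring K] (a b : K) : Prop := ∃ c, a + c = b

/-- The natural preorder of the period semiring (on coalesced temporal `K`-elements). -/
def tle {N : ℕ} [CommSemiring K] (k k' : TempEl N K) : Prop :=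
  ∃ k'' : TempEl N K, Coalesced k'' ∧ tadd k k'' = k'

/-- The pointwise monus: assigns `τ_T(k) −_K τ_T(k')` to each singleton interval
`(T, T+1)` and `0` to every non-singleton interval. -/
noncomputable def pmonus {N : ℕ} [CommSemiring K] (monus : K → K → K)
    (k k' : TempEl N K) : TempEl N K :=
  fun I =>
    if (I.val.2 : ℕ) = (I.val.1 : ℕ) + 1 then
      monus (slice k (I.val.1 : ℕ)) (slice k' (I.val.1 : ℕ))
    else 0

/-- The monus of the period semiring: coalesced pointwise monus. -/
noncomputable def tmonus {N : ℕ} [CommSemiring K] (monus : K → K → K)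
    (k k' : TempEl N K) : TempEl N K :=
  coal (pmonus monus k k')

end TemporalK

open TemporalK

section Helpers

variable {K : Type*} [CommSemiring K] {N : ℕ}

lemma slice_zero_of_ge (𝒯 : TempEl N K) {T : ℕ} (hT : N ≤ T) : slice 𝒯 T = 0 := by
  unfold TemporalK.slice
  have h : Finset.univ.filter (fun I : TInterval N => Contains I T) = ∅ := by
    ext I
    simp only [Finset.mem_filter, Finset.mem_univ, true_and, Finset.notMem_empty, iff_false]
    rintro ⟨h1, h2⟩
    have := I.val.2.isLt
    omega
  rw [h, Finset.sum_empty]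

lemma slice_const (𝒯 : TempEl N K) {b T : ℕ} (hb : b ≤ T)
    (h : ∀ T', b < T' → T' ≤ T → ¬ Changepoint 𝒯 T') : slice 𝒯 b = slice 𝒯 T := by
  induction T with
  | zero =>
    have : b = 0 := Nat.le_zero.mp hb
    rw [this]
  | succ n ih =>
    rcases Nat.eq_or_lt_of_le hb with h1 | h1
    · rw [h1]
    · have hn : b ≤ n := by omega
      have hnc := h (n + 1) (by omega) le_rfl
      have hs : slice 𝒯 n = slice 𝒯 (n + 1) := by
        by_contra hne
        exact hnc (Or.inr (by simpa using hne))
      rw [ih hn (fun T' h1 h2 => h T' h1 (by omega)), hs]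

lemma cp_unique (𝒯 : TempEl N K) {I J : TInterval N} (hI : CPInterval 𝒯 I)
    (hJ : CPInterval 𝒯 J) {T : ℕ} (hIT : Contains I T) (hJT : Contains J T) : I = J := by
  obtain ⟨hI1, hI2, hI3⟩ := hI
  obtain ⟨hJ1, hJ2, hJ3⟩ := hJ
  obtain ⟨hIb, hIe⟩ := hIT
  obtain ⟨hJb, hJe⟩ := hJT
  have hb : (I.val.1 : ℕ) = (J.val.1 : ℕ) := by
    rcases lt_trichotomy (I.val.1 : ℕ) (J.val.1 : ℕ) with h | h | h
    · exact absurd hJ1 (hI3 _ h (by omega))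
    · exact h
    · exact absurd hI1 (hJ3 _ h (by omega))
  have he : (I.val.2 : ℕ) = (J.val.2 : ℕ) := by
    have hIN := I.val.2.isLt
    have hJN := J.val.2.isLt
    rcases lt_trichotomy (I.val.2 : ℕ) (J.val.2 : ℕ) with h | h | h
    · rcases hI2 with hc | hc
      · exact absurd hc (hJ3 _ (by omega) h)
      · omega
    · exact h
    · rcases hJ2 with hc | hc
      · exact absurd hc (hI3 _ (by omega) h)
      · omega
  exact Subtype.ext (Prod.ext (Fin.ext hb) (Fin.ext he))

lemma slice_coal (𝒯 : TempEl N K) (T : ℕ) : slice (coal 𝒯) T = slice 𝒯 T := by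
  rcases lt_or_ge T N with hTN | hTN
  · set b := Nat.findGreatest (Changepoint 𝒯) T with hbdef
    have hbT : b ≤ T := Nat.findGreatest_le T
    have hbc : Changepoint 𝒯 b := Nat.findGreatest_spec (Nat.zero_le T) (Or.inl rfl)
    have hex : ∃ e, T < e ∧ (Changepoint 𝒯 e ∨ e = N) := ⟨N, hTN, Or.inr rfl⟩
    set e := Nat.find hex with hedef
    obtain ⟨hTe, hec⟩ := Nat.find_spec hex
    have heN : e ≤ N := Nat.find_le ⟨hTN, Or.inr rfl⟩
    have hnc : ∀ T', b < T' → T' < e → ¬ Changepoint 𝒯 T' := by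
      intro T' h1 h2 hc
      rcases le_or_gt T' T with h3 | h3
      · exact Nat.findGreatest_is_greatest h1 h3 hc
      · exact Nat.find_min hex h2 ⟨h3, Or.inl hc⟩
    set I₀ : TInterval N := ⟨(⟨b, by omega⟩, ⟨e, by omega⟩), Fin.mk_lt_mk.mpr (by omega)⟩
      with hI₀def
    have hcp : CPInterval 𝒯 I₀ := ⟨hbc, hec, hnc⟩
    have hmem : I₀ ∈ Finset.univ.filter (fun I : TInterval N => Contains I T) := by
      simp only [Finset.mem_filter, Finset.mem_univ, true_and]
      exact ⟨hbT, hTe⟩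
    have hzero : ∀ J ∈ Finset.univ.filter (fun I : TInterval N => Contains I T),
        J ≠ I₀ → coal 𝒯 J = 0 := by
      intro J hJ hne
      simp only [Finset.mem_filter, Finset.mem_univ, true_and] at hJ
      unfold coal
      rw [if_neg]
      intro hc
      exact hne (cp_unique 𝒯 hc hcp hJ ⟨hbT, hTe⟩)
    have key : slice (coal 𝒯) T = coal 𝒯 I₀ := Finset.sum_eq_single_of_mem I₀ hmem hzero
    rw [key]
    unfold coal
    rw [if_pos hcp]
    exact slice_const 𝒯 hbT (fun T' h1 h2 => hnc T' h1 (by omega))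
  · rw [slice_zero_of_ge _ hTN, slice_zero_of_ge _ hTN]

lemma coal_congr {𝒯 𝒯' : TempEl N K} (h : ∀ T, slice 𝒯 T = slice 𝒯' T) :
    coal 𝒯 = coal 𝒯' := by
  have hc : ∀ T, Changepoint 𝒯 T ↔ Changepoint 𝒯' T := fun T => by
    unfold Changepoint; rw [h, h]
  have hcp : ∀ I : TInterval N, CPInterval 𝒯 I ↔ CPInterval 𝒯' I := fun I => by
    unfold CPInterval; simp only [hc]
  funext I
  unfold coal
  by_cases hI : CPInterval 𝒯 I
  · rw [if_pos hI, if_pos ((hcp I).mp hI), h]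
  · rw [if_neg hI, if_neg (fun hh => hI ((hcp I).mpr hh))]

lemma coal_self {k : TempEl N K} (hk : Coalesced k) : coal k = k := by
  obtain ⟨𝒯, rfl⟩ := hk
  exact coal_congr (fun T => slice_coal 𝒯 T)

lemma coalesced_ext {k k' : TempEl N K} (hk : Coalesced k) (hk' : Coalesced k')
    (h : ∀ T, T < N → slice k T = slice k' T) : k = k' := by
  have hall : ∀ T, slice k T = slice k' T := by
    intro T
    rcases lt_or_ge T N with hT | hT
    · exact h T hT
    · rw [slice_zero_of_ge _ hT, slice_zero_of_ge _ hT]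
  rw [← coal_self hk, ← coal_self hk', coal_congr hall]

lemma slice_padd (k k' : TempEl N K) (T : ℕ) :
    slice (padd k k') T = slice k T + slice k' T := by
  unfold TemporalK.slice padd
  rw [Finset.sum_add_distrib]

lemma slice_sing (g : ℕ → K) {T : ℕ} (hT : T < N) :
    slice (fun I : TInterval N =>
      if (I.val.2 : ℕ) = (I.val.1 : ℕ) + 1 then g (I.val.1 : ℕ) else 0) T = g T := by
  set I₀ : TInterval N := ⟨(⟨T, by omega⟩, ⟨T + 1, by omega⟩), Fin.mk_lt_mk.mpr (by omega)⟩
    with hI₀def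
  have hmem : I₀ ∈ Finset.univ.filter (fun I : TInterval N => Contains I T) := by
    simp only [Finset.mem_filter, Finset.mem_univ, true_and]
    exact ⟨le_refl T, Nat.lt_succ_self T⟩
  have hzero : ∀ J ∈ Finset.univ.filter (fun I : TInterval N => Contains I T),
      J ≠ I₀ → (if (J.val.2 : ℕ) = (J.val.1 : ℕ) + 1 then g (J.val.1 : ℕ) else 0) = 0 := by
    intro J hJ hne
    simp only [Finset.mem_filter, Finset.mem_univ, true_and] at hJ
    obtain ⟨h1, h2⟩ := hJ
    rw [if_neg]
    intro h
    apply hne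
    have hb : (J.val.1 : ℕ) = T := by omega
    have hee : (J.val.2 : ℕ) = T + 1 := by omega
    rw [hI₀def]
    exact Subtype.ext (Prod.ext (Fin.ext hb) (Fin.ext hee))
  have key : slice (fun I : TInterval N =>
      if (I.val.2 : ℕ) = (I.val.1 : ℕ) + 1 then g (I.val.1 : ℕ) else 0) T
      = (if ((I₀.val.2 : ℕ)) = (I₀.val.1 : ℕ) + 1 then g (I₀.val.1 : ℕ) else 0) :=
    Finset.sum_eq_single_of_mem I₀ hmem hzero
  rw [key, if_pos rfl]

lemma slice_pmonus (monus : K → K → K) (k k' : TempEl N K) {T : ℕ} (hT : T < N) :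
    slice (pmonus monus k k') T = monus (slice k T) (slice k' T) := by
  unfold pmonus
  exact slice_sing (fun b => monus (slice k b) (slice k' b)) hT

lemma tle_of_slice {k k' : TempEl N K} (hk' : Coalesced k')
    (h : ∀ T, T < N → nle (slice k T) (slice k' T)) : tle k k' := by
  choose c hc using h
  set g : ℕ → K := fun T => if hT : T < N then c T hT else 0 with hg
  refine ⟨coal (fun I : TInterval N =>
    if (I.val.2 : ℕ) = (I.val.1 : ℕ) + 1 then g (I.val.1 : ℕ) else 0), ⟨_, rfl⟩, ?_⟩
  apply coalesced_ext ⟨_, rfl⟩ hk'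
  intro T hT
  rw [slice_coal, slice_padd, slice_coal, slice_sing g hT]
  have : g T = c T hT := by rw [hg]; simp only [dif_pos hT]
  rw [this]
  exact hc T hT

lemma slice_tle {k k' : TempEl N K} (h : tle k k') {T : ℕ} :
    nle (slice k T) (slice k' T) := by
  obtain ⟨w, _, heq⟩ := h
  refine ⟨slice w T, ?_⟩
  rw [← heq]
  unfold tadd
  rw [slice_coal, slice_padd]

end Helpers

theorem period_semiring_monus {N : ℕ} (hN : 1 ≤ N) {K : Type*} [CommSemiring K]
    (hanti : ∀ a b : K, nle a b → nle b a → a = b)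
    (monus : K → K → K)
    (hmem : ∀ a b : K, nle a (b + monus a b))
    (hleast : ∀ a b c : K, nle a (b + c) → nle (monus a b) c)
    (k k' : TempEl N K) (hk : Coalesced k) (hk' : Coalesced k') :
    Coalesced (tmonus monus k k') ∧
    tle k (tadd k' (tmonus monus k k')) ∧
    (∀ k'' : TempEl N K, Coalesced k'' → tle k (tadd k' k'') →
        tle (tmonus monus k k') k'') := by
  have hm : Coalesced (tmonus monus k k') := ⟨_, rfl⟩
  have hslice_m : ∀ T, T < N → slice (tmonus monus k k') T
      = monus (slice k T) (slice k' T) := by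
    intro T hT
    unfold tmonus
    rw [slice_coal]
    exact slice_pmonus monus k k' hT
  refine ⟨hm, ?_, ?_⟩
  · apply tle_of_slice ⟨_, rfl⟩
    intro T hT
    rw [slice_coal, slice_padd, hslice_m T hT]
    exact hmem _ _
  · intro k'' hc'' hle
    apply tle_of_slice hc''
    intro T hT
    obtain ⟨w, hs⟩ := slice_tle hle (T := T)
    rw [hslice_m T hT]
    unfold tadd at hs
    rw [slice_coal, slice_padd] at hs
    exact hleast _ _ _ ⟨w, hs⟩
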